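/- Let X = {x_1, ..., x_k} be a finite subset of ℝ^n equipped with the metric induced by the 1-norm ‖·‖₁. Let P_s : ℝ^n → ℝ be the s-th coordinate projection, and for a bounded set A ⊆ ℝ let D(A) denote its diameter. Then ∑_{s=1}^n D(P_s(X)) ≤ (k/2) · D(X), where D(X) is the diameter of X in the 1-norm. -/

import Mathlib

open Finset

private lemma tele_abs (F : ℕ → ℝ) {m n : ℕ} (h : m ≤ n) :
    |F n - F m| ≤ ∑ i ∈ Finset.Ico m n, |F (i + 1) - F i| := by
  have hsum : ∑ i ∈ Finset.Ico m n, (F (i + 1) - F i) = F n - F m := by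
    rw [Finset.sum_Ico_eq_sub _ h, Finset.sum_range_sub, Finset.sum_range_sub]
    ring
  calc |F n - F m| = |∑ i ∈ Finset.Ico m n, (F (i + 1) - F i)| := by rw [hsum]
    _ ≤ ∑ i ∈ Finset.Ico m n, |F (i + 1) - F i| := Finset.abs_sum_le_sum_abs _ _

private lemma cycle_bound (k : ℕ) (F : ℕ → ℝ) (hFk : F k = F 0) {a b : ℕ}
    (hab : a ≤ b) (hbk : b ≤ k) :
    2 * |F a - F b| ≤ ∑ i ∈ Finset.range k, |F (i + 1) - F i| := by
  have t1 := tele_abs F hab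
  have t2 := tele_abs F (Nat.zero_le a)
  have t3 := tele_abs F hbk
  have h4 : |F a - F b| ≤ |F a - F 0| + |F 0 - F b| := abs_sub_le _ _ _
  have h5 : |F a - F b| = |F b - F a| := abs_sub_comm _ _
  have h6 : |F 0 - F b| = |F k - F b| := by rw [hFk]
  have h7 : |F k - F b| = |F b - F k| := abs_sub_comm _ _
  have hsplit : ∑ i ∈ Finset.range k, |F (i + 1) - F i| =
      (∑ i ∈ Finset.Ico 0 a, |F (i + 1) - F i|) +
      (∑ i ∈ Finset.Ico a b, |F (i + 1) - F i|) +
      (∑ i ∈ Finset.Ico b k, |F (i + 1) - F i|) := by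
    rw [Finset.range_eq_Ico, ← Finset.sum_Ico_consecutive _ (Nat.zero_le b) hbk,
      ← Finset.sum_Ico_consecutive _ (Nat.zero_le a) hab]
  rw [hsplit]
  linarith

theorem stmt_4 (n : ℕ) (X : Finset (PiLp 1 fun _ : Fin n => ℝ)) :
    ∑ s : Fin n, Metric.diam ((fun v => v s) '' (X : Set (PiLp 1 fun _ : Fin n => ℝ))) ≤
      ((X.card : ℝ) / 2) * Metric.diam (X : Set (PiLp 1 fun _ : Fin n => ℝ)) := by
  set k := X.card with hk
  rcases Nat.eq_zero_or_pos k with hk0 | hkpos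
  · have hX : X = ∅ := Finset.card_eq_zero.mp hk0
    subst hX
    simp
  set l := X.toList with hl
  have hlen : l.length = k := Finset.length_toList X
  set G : ℕ → (PiLp 1 fun _ : Fin n => ℝ) :=
    fun m => l.get ⟨m % k, by rw [hlen]; exact Nat.mod_lt m hkpos⟩ with hG
  have hmemG : ∀ m, G m ∈ X := fun m => Finset.mem_toList.mp (List.get_mem _ _)
  have hGk : G k = G 0 := by simp [hG]
  have hsurj : ∀ x ∈ X, ∃ m, m < k ∧ G m = x := by
    intro x hx
    obtain ⟨i, hi⟩ := List.mem_iff_get.mp (Finset.mem_toList.mpr hx)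
    have hik : i.val < k := by rw [← hlen]; exact i.isLt
    have h2 : i.val % k = i.val := Nat.mod_eq_of_lt hik
    refine ⟨i.val, hik, ?_⟩
    simp only [hG]
    convert hi using 2
    exact Fin.ext (by simpa using h2)
  have hdist : ∀ x y : PiLp 1 fun _ : Fin n => ℝ, dist x y = ∑ s, |x s - y s| := by
    intro x y
    rw [PiLp.dist_eq_sum (by norm_num : (0:ℝ) < (1 : ENNReal).toReal)]
    simp [Real.dist_eq]
  have hbdd : Bornology.IsBounded (X : Set (PiLp 1 fun _ : Fin n => ℝ)) :=
    X.finite_toSet.isBounded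
  have step1 : ∀ s : Fin n,
      Metric.diam ((fun v => v s) '' (X : Set (PiLp 1 fun _ : Fin n => ℝ))) ≤
        (∑ i ∈ Finset.range k, |G (i + 1) s - G i s|) / 2 := by
    intro s
    have hnn : (0:ℝ) ≤ (∑ i ∈ Finset.range k, |G (i + 1) s - G i s|) / 2 := by positivity
    apply Metric.diam_le_of_forall_dist_le hnn
    rintro u ⟨x, hx, rfl⟩ v ⟨y, hy, rfl⟩
    obtain ⟨a, hak, rfl⟩ := hsurj x hx
    obtain ⟨b, hbk, rfl⟩ := hsurj y hy
    rw [Real.dist_eq]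
    have key : ∀ a b : ℕ, a ≤ b → b ≤ k →
        |G a s - G b s| ≤ (∑ i ∈ Finset.range k, |G (i + 1) s - G i s|) / 2 := by
      intro a b hab hbk'
      have hFk : (fun m => G m s) k = (fun m => G m s) 0 := by simp [hGk]
      have := cycle_bound k (fun m => G m s) hFk hab hbk'
      simp only at this
      linarith
    rcases le_total a b with h | h
    · exact key a b h hbk.le
    · rw [abs_sub_comm]; exact key b a h hak.le
  calc ∑ s : Fin n, Metric.diam ((fun v => v s) '' (X : Set (PiLp 1 fun _ : Fin n => ℝ)))
      ≤ ∑ s : Fin n, (∑ i ∈ Finset.range k, |G (i + 1) s - G i s|) / 2 :=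
        Finset.sum_le_sum fun s _ => step1 s
    _ = (∑ i ∈ Finset.range k, ∑ s : Fin n, |G (i + 1) s - G i s|) / 2 := by
        rw [← Finset.sum_div, Finset.sum_comm]
    _ = (∑ i ∈ Finset.range k, dist (G (i + 1)) (G i)) / 2 := by
        rw [Finset.sum_congr rfl fun i _ => (hdist (G (i + 1)) (G i)).symm]
    _ ≤ (∑ _i ∈ Finset.range k, Metric.diam (X : Set (PiLp 1 fun _ : Fin n => ℝ))) / 2 := by
        gcongr with i hi
        exact Metric.dist_le_diam_of_mem hbdd (hmemG _) (hmemG _)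
    _ = ((k : ℝ) / 2) * Metric.diam (X : Set (PiLp 1 fun _ : Fin n => ℝ)) := by
        rw [Finset.sum_const, Finset.card_range]
        ring
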